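/- Suppose f: ℝⁿ → (0,∞) is (−λ)-log-concave for some 0 ≤ λ < 1, f dγ is a probability measure, and Caffarelli's theorem holds (every probability measure log-concave relative to γ is a 1-Lipschitz image of γ). Then f dγ is a (1/√(1−λ))-Lipschitz image of γ. -/

import Mathlib

open MeasureTheory

/-- The standard Gaussian measure on ℝⁿ. -/
noncomputable def stdGaussian (n : ℕ) : Measure (EuclideanSpace ℝ (Fin n)) :=
  volume.withDensity
    (fun x => ENNReal.ofReal ((2 * Real.pi) ^ (-(n : ℝ) / 2) * Real.exp (-‖x‖ ^ 2 / 2)))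

lemma aux_map_smul_withDensity {n : ℕ} (c : ℝ) (hc : c ≠ 0)
    (ψ : EuclideanSpace ℝ (Fin n) → ENNReal) (hψ : Measurable ψ) :
    Measure.map (c • ·) (volume.withDensity ψ) =
      volume.withDensity
        (fun x => ENNReal.ofReal (|c ^ n|⁻¹) * ψ (c⁻¹ • x)) := by
  have hT : Measurable (fun x : EuclideanSpace ℝ (Fin n) => c • x) :=
    measurable_const_smul c
  have hψ' : Measurable (fun x : EuclideanSpace ℝ (Fin n) => ψ (c⁻¹ • x)) :=
    hψ.comp (measurable_const_smul c⁻¹)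
  ext s hs
  rw [Measure.map_apply hT hs, withDensity_apply _ (hT hs), withDensity_apply _ hs]
  have key : ∫⁻ y in s, ψ (c⁻¹ • y) ∂(Measure.map (c • ·)
      (volume : Measure (EuclideanSpace ℝ (Fin n)))) = ∫⁻ x in (c • ·) ⁻¹' s, ψ x := by
    rw [setLIntegral_map hs hψ' hT]
    congr 1
    ext x
    simp [smul_smul, inv_mul_cancel₀ hc]
  have hmap : Measure.map (c • ·) (volume : Measure (EuclideanSpace ℝ (Fin n)))
      = ENNReal.ofReal (|c ^ n|⁻¹) • volume := by
    rw [Measure.map_addHaar_smul volume hc]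
    congr 2
    simp [finrank_euclideanSpace, abs_inv, abs_pow]
  rw [← key, hmap]
  simp [lintegral_smul_measure, lintegral_const_mul _ hψ']


/-- assuming Caffarelli's theorem, if `f > 0` is `(-λ)`-log-concave with
`0 ≤ λ < 1` and `f dγ` is a probability measure, then `f dγ` is a
`(1/√(1-λ))`-Lipschitz image of `γ`. -/
theorem stmt_19 (n : ℕ)
    (caffarelli : ∀ g : EuclideanSpace ℝ (Fin n) → ℝ, (∀ x, 0 < g x) →
      ConcaveOn ℝ Set.univ (fun x => Real.log (g x)) →
      IsProbabilityMeasure ((stdGaussian n).withDensity (fun x => ENNReal.ofReal (g x))) →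
      ∃ T : EuclideanSpace ℝ (Fin n) → EuclideanSpace ℝ (Fin n),
        LipschitzWith 1 T ∧
        (stdGaussian n).map T =
          (stdGaussian n).withDensity (fun x => ENNReal.ofReal (g x)))
    (f : EuclideanSpace ℝ (Fin n) → ℝ) (hpos : ∀ x, 0 < f x)
    (lam : ℝ) (hlam0 : 0 ≤ lam) (hlam1 : lam < 1)
    (hconc : ConcaveOn ℝ Set.univ (fun x => Real.log (f x) - lam * ‖x‖ ^ 2 / 2))
    (hprob : IsProbabilityMeasure
      ((stdGaussian n).withDensity (fun x => ENNReal.ofReal (f x)))) :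
    ∃ T : EuclideanSpace ℝ (Fin n) → EuclideanSpace ℝ (Fin n),
      LipschitzWith (Real.toNNReal (1 / Real.sqrt (1 - lam))) T ∧
      (stdGaussian n).map T =
        (stdGaussian n).withDensity (fun x => ENNReal.ofReal (f x)) := by
  classical
  have h1lam : (0:ℝ) < 1 - lam := by linarith
  set s : ℝ := Real.sqrt (1 - lam) with hs_def
  have hs_pos : 0 < s := Real.sqrt_pos.2 h1lam
  have hs_ne : s ≠ 0 := hs_pos.ne'
  have hs_sq : s ^ 2 = 1 - lam := Real.sq_sqrt h1lam.le
  -- continuity of f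
  have hF : Continuous fun x : EuclideanSpace ℝ (Fin n) => Real.log (f x) - lam * ‖x‖ ^ 2 / 2 := by
    exact continuousOn_univ.mp (hconc.continuousOn isOpen_univ)
  have hlogf : Continuous fun x : EuclideanSpace ℝ (Fin n) => Real.log (f x) := by
    have hq : Continuous fun x : EuclideanSpace ℝ (Fin n) => lam * ‖x‖ ^ 2 / 2 := by fun_prop
    have := hF.add hq
    exact this.congr (fun x => by simp)
  have hf_cont : Continuous f := by
    have hfe : f = fun x => Real.exp (Real.log (f x)) :=
      funext fun x => (Real.exp_log (hpos x)).symm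
    rw [hfe]
    exact Real.continuous_exp.comp hlogf
  -- the rescaled density
  set g : EuclideanSpace ℝ (Fin n) → ℝ := fun x =>
    (s ^ n)⁻¹ * (f (s⁻¹ • x) * Real.exp (-(lam * ‖s⁻¹ • x‖ ^ 2 / 2))) with hg_def
  have hgpos : ∀ x, 0 < g x := by
    intro x
    have := hpos (s⁻¹ • x)
    positivity
  have hg_cont : Continuous g := by
    have h1 : Continuous fun x : EuclideanSpace ℝ (Fin n) => s⁻¹ • x := continuous_const_smul _
    fun_prop
  -- log-concavity of g
  have hgconc : ConcaveOn ℝ Set.univ (fun x => Real.log (g x)) := by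
    have hcomp : ConcaveOn ℝ Set.univ
        (fun x : EuclideanSpace ℝ (Fin n) => Real.log (f (s⁻¹ • x)) - lam * ‖s⁻¹ • x‖ ^ 2 / 2) := by
      have := hconc.comp_linearMap (s⁻¹ • (LinearMap.id : EuclideanSpace ℝ (Fin n) →ₗ[ℝ] EuclideanSpace ℝ (Fin n)))
      exact this
    have hadd := hcomp.add_const (Real.log ((s ^ n)⁻¹))
    have heq : (fun x => Real.log (g x)) =
        fun x : EuclideanSpace ℝ (Fin n) => (Real.log (f (s⁻¹ • x)) - lam * ‖s⁻¹ • x‖ ^ 2 / 2)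
          + Real.log ((s ^ n)⁻¹) := by
      funext x
      have hfx := hpos (s⁻¹ • x)
      have hsn : (s ^ n)⁻¹ ≠ 0 := by positivity
      rw [hg_def]
      rw [Real.log_mul hsn (by positivity), Real.log_mul hfx.ne' (Real.exp_ne_zero _),
        Real.log_exp]
      ring
    rw [heq]
    exact hadd
  -- measurability
  set φ : EuclideanSpace ℝ (Fin n) → ENNReal := fun x =>
    ENNReal.ofReal ((2 * Real.pi) ^ (-(n : ℝ) / 2) * Real.exp (-‖x‖ ^ 2 / 2)) with hφ_def
  have hφm : Measurable φ := by
    apply Measurable.ennreal_ofReal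
    fun_prop
  have hfm : Measurable fun x : EuclideanSpace ℝ (Fin n) => ENNReal.ofReal (f x) :=
    (ENNReal.continuous_ofReal.comp hf_cont).measurable
  have hgm : Measurable fun x : EuclideanSpace ℝ (Fin n) => ENNReal.ofReal (g x) :=
    (ENNReal.continuous_ofReal.comp hg_cont).measurable
  have hmuf : (stdGaussian n).withDensity (fun x => ENNReal.ofReal (f x))
      = volume.withDensity (fun x => φ x * ENNReal.ofReal (f x)) := by
    rw [show stdGaussian n = volume.withDensity φ from rfl, ← withDensity_mul _ hφm hfm]
    rfl
  have hmug : (stdGaussian n).withDensity (fun x => ENNReal.ofReal (g x))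
      = volume.withDensity (fun x => φ x * ENNReal.ofReal (g x)) := by
    rw [show stdGaussian n = volume.withDensity φ from rfl, ← withDensity_mul _ hφm hgm]
    rfl
  -- key measure identity
  have hmap : Measure.map (s • ·)
        ((stdGaussian n).withDensity (fun x => ENNReal.ofReal (f x)))
      = (stdGaussian n).withDensity (fun x => ENNReal.ofReal (g x)) := by
    rw [hmuf, hmug, aux_map_smul_withDensity s hs_ne (fun x => φ x * ENNReal.ofReal (f x)) (hφm.mul hfm)]
    congr 1
    funext x
    have hfx := hpos (s⁻¹ • x)
    have hny : ‖s⁻¹ • x‖ ^ 2 = (s ^ 2)⁻¹ * ‖x‖ ^ 2 := by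
      rw [norm_smul]
      simp [mul_pow, abs_of_pos (inv_pos.2 hs_pos), inv_pow]
    have hexp : Real.exp (-‖s⁻¹ • x‖ ^ 2 / 2)
        = Real.exp (-‖x‖ ^ 2 / 2) * Real.exp (-(lam * ‖s⁻¹ • x‖ ^ 2 / 2)) := by
      rw [← Real.exp_add]
      congr 1
      rw [hny, hs_sq]
      field_simp
      ring
    rw [hφ_def, hg_def]
    simp only
    rw [← ENNReal.ofReal_mul (by positivity), ← ENNReal.ofReal_mul (by positivity),
      ← ENNReal.ofReal_mul (by positivity)]
    congr 1
    rw [hexp]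
    have habs : |s ^ n| = s ^ n := abs_of_pos (by positivity)
    rw [habs]
    ring
  have hprobg : IsProbabilityMeasure
      ((stdGaussian n).withDensity (fun x => ENNReal.ofReal (g x))) := by
    rw [← hmap]
    exact Measure.isProbabilityMeasure_map (measurable_const_smul s).aemeasurable
  obtain ⟨T₁, hT₁l, hT₁m⟩ := caffarelli g hgpos hgconc hprobg
  refine ⟨fun x => s⁻¹ • T₁ x, ?_, ?_⟩
  · have h2 : LipschitzWith (‖(s⁻¹ : ℝ)‖₊ * 1) (fun x => s⁻¹ • T₁ x) :=
      (lipschitzWith_smul s⁻¹).comp hT₁l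
    have hc : Real.toNNReal (1 / Real.sqrt (1 - lam)) = ‖(s⁻¹ : ℝ)‖₊ * 1 := by
      rw [mul_one]
      apply NNReal.coe_injective
      rw [Real.coe_toNNReal _ (by positivity), coe_nnnorm, Real.norm_eq_abs,
        abs_of_pos (by positivity), one_div]
    rw [hc]
    exact h2
  · have hTm : Measurable T₁ := hT₁l.continuous.measurable
    have hstep : Measure.map (fun x => s⁻¹ • T₁ x) (stdGaussian n)
        = Measure.map (s⁻¹ • ·) (Measure.map T₁ (stdGaussian n)) :=
      (Measure.map_map (measurable_const_smul s⁻¹) hTm).symm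
    rw [hstep, hT₁m, ← hmap,
      Measure.map_map (measurable_const_smul s⁻¹) (measurable_const_smul s)]
    have : ((s⁻¹ • ·) ∘ (s • ·) : EuclideanSpace ℝ (Fin n) → EuclideanSpace ℝ (Fin n)) = id := by
      funext y
      simp [smul_smul, inv_mul_cancel₀ hs_ne]
    rw [this, Measure.map_id]
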